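/- Let c be a real number. Define g : ℝ → ℝ by g(τ) = Σ_{k=0}^{∞} (−1)^k · exp(c·(τ − k)) · (τ − k)^k / k! · 𝟙_{τ ≥ k} (a finite sum for each τ), and g(τ) = 0 for τ < 0. Then for every real τ > 0 that is not a natural number, g is differentiable at τ and g′(τ) = c·g(τ) − g(τ − 1). -/

import Mathlib

open Real

theorem stmt7 (c : ℝ) :
    let g : ℝ → ℝ := fun τ => ∑' k : ℕ,
      if (k : ℝ) ≤ τ then
        (-1) ^ k * Real.exp (c * (τ - k)) * (τ - k) ^ k / (Nat.factorial k) else 0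
    ∀ τ : ℝ, 0 < τ → (∀ n : ℕ, τ ≠ n) →
      HasDerivAt g (c * g τ - g (τ - 1)) τ := by
  intro g τ hτ hne
  set N := ⌊τ⌋₊ with hN
  have hτ0 : (0:ℝ) ≤ τ := hτ.le
  have hNlt : (N : ℝ) < τ := lt_of_le_of_ne (Nat.floor_le hτ0) fun h => hne N h.symm
  have hltN : τ < (N : ℝ) + 1 := Nat.lt_floor_add_one τ
  set F : ℝ → ℝ := fun t => ∑ k ∈ Finset.range (N+1),
    (-1) ^ k * Real.exp (c * (t - k)) * (t - k) ^ k / (Nat.factorial k) with hF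
  -- g equals F on the interval
  have hgval : ∀ t ∈ Set.Ioo ((N:ℝ)) ((N:ℝ)+1), g t = F t := by
    intro t ht
    have hiff : ∀ k : ℕ, ((k:ℝ) ≤ t ↔ k ∈ Finset.range (N+1)) := by
      intro k
      simp only [Finset.mem_range, Nat.lt_succ_iff]
      constructor
      · intro h
        have h2 : (k:ℝ) < (N:ℝ)+1 := lt_of_le_of_lt h ht.2
        have : k < N + 1 := by exact_mod_cast h2
        omega
      · intro h
        have : (k:ℝ) ≤ (N:ℝ) := by exact_mod_cast h
        linarith [ht.1]
    simp only [g, hF]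
    rw [tsum_eq_sum (s := Finset.range (N+1)) (fun k hk => if_neg (fun h => hk ((hiff k).mp h)))]
    exact Finset.sum_congr rfl fun k hk => if_pos ((hiff k).mpr hk)
  have hτmem : τ ∈ Set.Ioo ((N:ℝ)) ((N:ℝ)+1) := ⟨hNlt, hltN⟩
  -- value of g at τ - 1
  have hgval' : g (τ - 1) = ∑ j ∈ Finset.range N,
      (-1) ^ j * Real.exp (c * (τ - 1 - j)) * (τ - 1 - j) ^ j / (Nat.factorial j) := by
    have hiff : ∀ j : ℕ, ((j:ℝ) ≤ τ - 1 ↔ j ∈ Finset.range N) := by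
      intro j
      simp only [Finset.mem_range]
      constructor
      · intro h
        have h2 : (j:ℝ) + 1 ≤ τ := by linarith
        have h3 : (j:ℝ) < (N:ℝ) := by linarith
        exact_mod_cast h3
      · intro h
        have h2 : j + 1 ≤ N := h
        have : (j:ℝ) + 1 ≤ (N:ℝ) := by exact_mod_cast h2
        linarith
    simp only [g]
    rw [tsum_eq_sum (s := Finset.range N) (fun k hk => if_neg (fun h => hk ((hiff k).mp h)))]
    exact Finset.sum_congr rfl fun k hk => if_pos ((hiff k).mpr hk)
  -- derivative of F
  have hDF : HasDerivAt F (∑ k ∈ Finset.range (N+1),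
      (((-1:ℝ) ^ k * (c * Real.exp (c * (τ - k)))) * (τ - k) ^ k +
        ((-1:ℝ) ^ k * Real.exp (c * (τ - k))) * ((k:ℝ) * (τ - k) ^ (k - 1))) /
        (Nat.factorial k)) τ := by
    apply HasDerivAt.fun_sum
    intro k _
    have h1 : HasDerivAt (fun t : ℝ => c * (t - (k:ℝ))) c τ := by
      simpa using ((hasDerivAt_id τ).sub_const (k:ℝ)).const_mul c
    have h2 : HasDerivAt (fun t : ℝ => Real.exp (c * (t - k))) (c * Real.exp (c * (τ - k))) τ := by
      have := h1.exp
      convert this using 1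
      ring
    have h3 : HasDerivAt (fun t : ℝ => (t - (k:ℝ)) ^ k) ((k:ℝ) * (τ - k) ^ (k - 1)) τ := by
      simpa using ((hasDerivAt_id τ).sub_const (k:ℝ)).fun_pow k
    exact ((h2.const_mul ((-1:ℝ)^k)).mul h3).div_const (Nat.factorial k)
  -- the derivative equals c * g τ - g (τ - 1)
  have hEq : (∑ k ∈ Finset.range (N+1),
      (((-1:ℝ) ^ k * (c * Real.exp (c * (τ - k)))) * (τ - k) ^ k +
        ((-1:ℝ) ^ k * Real.exp (c * (τ - k))) * ((k:ℝ) * (τ - k) ^ (k - 1))) /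
        (Nat.factorial k)) = c * g τ - g (τ - 1) := by
    rw [hgval τ hτmem, hgval']
    have split : ∀ k ∈ Finset.range (N+1),
        (((-1:ℝ) ^ k * (c * Real.exp (c * (τ - k)))) * (τ - k) ^ k +
          ((-1:ℝ) ^ k * Real.exp (c * (τ - k))) * ((k:ℝ) * (τ - k) ^ (k - 1))) /
          (Nat.factorial k)
        = c * ((-1:ℝ) ^ k * Real.exp (c * (τ - k)) * (τ - k) ^ k / (Nat.factorial k))
          + ((-1:ℝ) ^ k * Real.exp (c * (τ - k)) * ((k:ℝ) * (τ - k) ^ (k - 1)) / (Nat.factorial k)) := by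
      intro k _
      ring
    rw [Finset.sum_congr rfl split, Finset.sum_add_distrib, ← Finset.mul_sum]
    simp only [hF]
    congr 1
    rw [Finset.sum_range_succ']
    simp only [Nat.cast_zero, pow_zero, Nat.factorial_zero, Nat.cast_one, zero_mul, mul_zero,
      zero_div, add_zero]
    rw [← Finset.sum_neg_distrib]
    apply Finset.sum_congr rfl
    intro j _
    have hfac : (Nat.factorial (j+1) : ℝ) = ((j:ℝ)+1) * (Nat.factorial j : ℝ) := by
      rw [Nat.factorial_succ]; push_cast; ring
    have hc1 : ((j+1 : ℕ) : ℝ) = (j:ℝ) + 1 := by push_cast; ring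
    have hj1 : ((j:ℝ)+1) ≠ 0 := by positivity
    have hjf : (Nat.factorial j : ℝ) ≠ 0 := by exact_mod_cast Nat.factorial_ne_zero j
    rw [hc1, hfac]
    have hc2 : τ - ((j:ℝ) + 1) = τ - 1 - (j:ℝ) := by ring
    rw [hc2]
    have hpow : (-1:ℝ) ^ (j+1) = -(-1:ℝ)^j := by rw [pow_succ]; ring
    rw [Nat.add_sub_cancel, hpow]
    field_simp
  -- conclude
  have hev : g =ᶠ[nhds τ] F :=
    Filter.eventuallyEq_of_mem (Ioo_mem_nhds hNlt hltN) hgval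
  rw [← hEq]
  exact hDF.congr_of_eventuallyEq hev
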